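/- Consider a simultaneous round of merges: a set of roots R' ⊆ R (roots of a correct forest F), each r ∈ R' selecting as new parent a node target(r) which is a root of F, subject to the condition that score(r) < score(target(r)) for a fixed injective score function on all nodes. Then the resulting parent structure (F together with the new edges r → target(r)) is still a correct forest. -/

import Mathlib

variable {V : Type*}

/-- Iterating a parent function `p : V → Option V`: `piter p n v` is the `n`-th parent
of `v` (or `none` if the chain has ended). -/
def piter (p : V → Option V) (n : ℕ) (v : V) : Option V := (fun o => o.bind p)^[n] (some v)

/-- A vertex is valid if some finite iteration of the parent function from it reaches a
vertex with no parent (a root). -/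
def pvalid (p : V → Option V) (v : V) : Prop := ∃ n u, piter p n v = some u ∧ p u = none

/-- Weak connectivity relation of the functional digraph with edges `v → p v`. -/
def pconn (p : V → Option V) : V → V → Prop :=
  Relation.ReflTransGen (fun a b => p a = some b ∨ p b = some a)

theorem pconn_equiv (p : V → Option V) : Equivalence (pconn p) :=
  ⟨fun _ => .refl,
   fun h => (@Relation.ReflTransGen.stdSymm _ _ ⟨fun _ _ hab => Or.symm hab⟩).symm _ _ h,
   fun h₁ h₂ => h₁.trans h₂⟩

/-- The setoid whose classes are the weakly connected components of the functional
digraph of `p`. -/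
def pSetoid (p : V → Option V) : Setoid V := ⟨pconn p, pconn_equiv p⟩

private lemma piter_none (p : V → Option V) (n : ℕ) :
    (fun o : Option V => o.bind p)^[n] none = none := by
  induction n with
  | zero => rfl
  | succ k ih => rw [Function.iterate_succ_apply]; simpa using ih

private lemma piter_succ (p : V → Option V) (n : ℕ) (v : V) :
    piter p (n + 1) v = (piter p n v).bind p := by
  unfold piter
  rw [Function.iterate_succ_apply']

private lemma piter_add (p : V → Option V) (m n : ℕ) (v : V) :
    piter p (m + n) v = (fun o : Option V => o.bind p)^[m] (piter p n v) :=
  Function.iterate_add_apply _ m n _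

private lemma piter_some_of_le {p : V → Option V} {n : ℕ} {v u : V}
    (h : piter p n v = some u) {k : ℕ} (hk : k ≤ n) : ∃ w, piter p k v = some w := by
  cases hw : piter p k v with
  | some w => exact ⟨w, rfl⟩
  | none =>
    exfalso
    have h2 := piter_add p (n - k) k v
    rw [Nat.sub_add_cancel hk, h, hw, piter_none] at h2
    exact absurd h2 (Option.some_ne_none _)

/-- A simultaneous round of merges: some roots of a correct forest each select as new
parent another root of strictly larger score (scores being injective). The resulting
parent structure is still a correct forest. -/
theorem simultaneous_select_correct {S : Type*} [LinearOrder S] [Fintype V]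
    (p : V → Option V) (hvalid : ∀ v, pvalid p v)
    (score : V → S) (hinj : Function.Injective score)
    (sel : V → Option V)
    (hsel : ∀ r t, sel r = some t → p r = none ∧ p t = none ∧ score r < score t) :
    ∀ v, pvalid (fun x => match sel x with | some t => some t | none => p x) v := by
  intro v
  set q : V → Option V := fun x => match sel x with | some t => some t | none => p x
    with hqdef
  have hq_nonroot : ∀ w, p w ≠ none → q w = p w := by
    intro w hw
    cases hs : sel w with
    | none => simp [hqdef, hs]
    | some t => exact absurd (hsel w t hs).1 hw
  have hq_root : ∀ w, p w = none →
      q w = none ∨ ∃ t, q w = some t ∧ p t = none ∧ score w < score t := by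
    intro w hw
    cases hs : sel w with
    | none => left; simp [hqdef, hs, hw]
    | some t =>
      right
      exact ⟨t, by simp [hqdef, hs], (hsel w t hs).2.1, (hsel w t hs).2.2⟩
  have key : ∀ N u, (Finset.univ.filter (fun w => score u < score w)).card ≤ N →
      p u = none → pvalid q u := by
    intro N
    induction N with
    | zero =>
      intro u hcard hroot
      rcases hq_root u hroot with h | ⟨t, hqt, htroot, hlt⟩
      · exact ⟨0, u, rfl, h⟩
      · exfalso
        have ht : t ∈ Finset.univ.filter (fun w => score u < score w) := by simp [hlt]
        have := Finset.card_pos.mpr ⟨t, ht⟩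
        omega
    | succ N ih =>
      intro u hcard hroot
      rcases hq_root u hroot with h | ⟨t, hqt, htroot, hlt⟩
      · exact ⟨0, u, rfl, h⟩
      · have hsub : Finset.univ.filter (fun w => score t < score w) ⊂
            Finset.univ.filter (fun w => score u < score w) := by
          constructor
          · intro w hw
            simp only [Finset.mem_filter, Finset.mem_univ, true_and] at *
            exact lt_trans hlt hw
          · intro hsub
            have := hsub (by simp [hlt] : t ∈ _)
            simp at this
        have hcard' := Finset.card_lt_card hsub
        obtain ⟨n, w, hn, hw⟩ := ih t (by omega) htroot
        refine ⟨n + 1, w, ?_, hw⟩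
        have h1 : piter q 1 u = some t := by
          unfold piter
          rw [Function.iterate_one]
          simpa using hqt
        have h2 : piter q (n + 1) u = piter q n t := by
          rw [piter_add q n 1 u, h1]; rfl
        rw [h2]; exact hn
  obtain ⟨n, u, hn, hu⟩ := hvalid v
  have hagree : ∀ k, k ≤ n → piter q k v = piter p k v := by
    intro k hk
    induction k with
    | zero => rfl
    | succ j ihj =>
      have hj : j ≤ n := Nat.le_of_succ_le hk
      obtain ⟨w, hw⟩ := piter_some_of_le hn hj
      have hwroot : p w ≠ none := by
        intro hwn
        obtain ⟨w', hw'⟩ := piter_some_of_le hn hk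
        rw [piter_succ, hw] at hw'
        simp [hwn] at hw'
      rw [piter_succ, piter_succ, ihj hj, hw]
      simp [hq_nonroot w hwroot]
  have hqn : piter q n v = some u := (hagree n le_rfl).trans hn
  obtain ⟨m, w, hm, hw⟩ := key _ u le_rfl hu
  refine ⟨m + n, w, ?_, hw⟩
  rw [piter_add q m n v, hqn]
  exact hm
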